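/- Let G and H be groups. The kernel of the canonical surjection π : G * H → G × H (restricting to the identity embedding on each factor) is a free group. -/

import Mathlib

open Monoid

namespace KerCoprodToProdAux

variable (G H : Type*) [Group G] [Group H]

/-- Index type for the free basis: pairs of nontrivial elements. -/
abbrev Idx := {p : G × H // p.1 ≠ 1 ∧ p.2 ≠ 1}

variable {G H}

/-- The "commutator" element `g h g⁻¹ h⁻¹` in `G ∗ H`. -/
def cc (g : G) (h : H) : Coprod G H :=
  Coprod.inl g * Coprod.inr h * Coprod.inl g⁻¹ * Coprod.inr h⁻¹

/-- Basis elements. -/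
def a (i : Idx G H) : Coprod G H := cc i.1.1 i.1.2

open scoped Classical in
/-- The element of the free group attached to a pair `(g, h)`; trivial if either is trivial. -/
noncomputable def xt (p : G × H) : FreeGroup (Idx G H) :=
  if h : p.1 ≠ 1 ∧ p.2 ≠ 1 then FreeGroup.of ⟨p, h⟩ else 1

lemma xt_fst_one (h : H) : xt ((1 : G), h) = 1 := by
  rw [xt, dif_neg]; simp

lemma xt_snd_one (g : G) : xt (g, (1 : H)) = 1 := by
  rw [xt, dif_neg]; simp

lemma xt_idx (i : Idx G H) : xt (i.1.1, i.1.2) = FreeGroup.of i := by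
  obtain ⟨⟨g, h⟩, hp⟩ := i
  exact dif_pos hp

variable (G H) in
/-- Right-translation action of `G × H` on functions `G × H → FreeGroup (Idx G H)`. -/
def shiftHom : (G × H) →* MulAut ((G × H) → FreeGroup (Idx G H)) where
  toFun d :=
    { toFun := fun α x => α (x * d)
      invFun := fun α x => α (x * d⁻¹)
      left_inv := fun α => by funext x; simp [mul_assoc]
      right_inv := fun α => by funext x; simp [mul_assoc]
      map_mul' := fun α β => rfl }
  map_one' := by ext α x; simp
  map_mul' d d' := by ext α x; simp [mul_assoc]

variable (G H) in
/-- The auxiliary semidirect product (a wreath-like product). -/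
abbrev W := ((G × H) → FreeGroup (Idx G H)) ⋊[shiftHom G H] (G × H)

lemma shiftHom_apply (d : G × H) (α : (G × H) → FreeGroup (Idx G H)) (x : G × H) :
    shiftHom G H d α x = α (x * d) := rfl

variable (G H) in
/-- The image of `G` in `W`. -/
noncomputable def PhiG : G →* W G H :=
  MonoidHom.mk' (fun g₀ => ⟨fun p => xt p * (xt (p.1 * g₀, p.2))⁻¹, (g₀, 1)⟩) (by
    intro g₀ g₁
    refine SemidirectProduct.ext ?_ ?_
    · funext p
      obtain ⟨p1, p2⟩ := p
      simp only [SemidirectProduct.mul_left, Pi.mul_apply, shiftHom_apply,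
        Prod.mk_mul_mk, mul_one]
      simp [mul_assoc]
    · simp only [SemidirectProduct.mul_right]
      simp [Prod.ext_iff])

lemma PhiG_apply (g₀ : G) :
    PhiG G H g₀ = ⟨fun p => xt p * (xt (p.1 * g₀, p.2))⁻¹, (g₀, 1)⟩ := rfl

variable (G H) in
/-- The image of `H` in `W`. -/
noncomputable def PhiH : H →* W G H :=
  MonoidHom.mk' (fun h₀ => ⟨1, (1, h₀)⟩) (by
    intro h₀ h₁
    refine SemidirectProduct.ext ?_ ?_
    · funext p
      simp only [SemidirectProduct.mul_left, Pi.mul_apply, shiftHom_apply, map_one]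
      simp
    · simp only [SemidirectProduct.mul_right]
      simp [Prod.ext_iff])

lemma PhiH_apply (h₀ : H) : PhiH G H h₀ = ⟨1, (1, h₀)⟩ := rfl

variable (G H) in
noncomputable def Phi : Coprod G H →* W G H := Coprod.lift (PhiG G H) (PhiH G H)

/-- Value of basis elements under `Phi`. -/
noncomputable def beta (i : Idx G H) : (G × H) → FreeGroup (Idx G H) := fun p =>
  xt p * (xt (p.1 * i.1.1, p.2))⁻¹ * xt (p.1 * i.1.1, p.2 * i.1.2) * (xt (p.1, p.2 * i.1.2))⁻¹

lemma Phi_a (i : Idx G H) : Phi G H (a i) = SemidirectProduct.inl (beta i) := by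
  obtain ⟨⟨g, h⟩, hgh⟩ := i
  show Phi G H (cc g h) = _
  rw [cc]
  simp only [map_mul, Phi, Coprod.lift_apply_inl, Coprod.lift_apply_inr,
    PhiG_apply, PhiH_apply]
  refine SemidirectProduct.ext ?_ ?_
  · funext p
    obtain ⟨p1, p2⟩ := p
    simp only [SemidirectProduct.mul_left, SemidirectProduct.mul_right,
      SemidirectProduct.left_inl, Pi.mul_apply, shiftHom_apply, map_one, Pi.one_apply,
      mul_one, one_mul, Prod.mk_mul_mk, beta]
    simp [mul_assoc]
  · simp only [SemidirectProduct.mul_right, SemidirectProduct.right_inl]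
    simp [Prod.ext_iff]

variable (G H) in
noncomputable def rho : FreeGroup (Idx G H) →* Coprod G H := FreeGroup.lift a

variable (G H) in
noncomputable def psi : FreeGroup (Idx G H) →* ((G × H) → FreeGroup (Idx G H)) :=
  FreeGroup.lift beta

lemma inl_comp_psi :
    (SemidirectProduct.inl : _ →* W G H).comp (psi G H) = (Phi G H).comp (rho G H) := by
  refine FreeGroup.ext_hom _ _ fun i => ?_
  simp [psi, rho, Phi_a]

lemma psi_eval (u : FreeGroup (Idx G H)) : psi G H u (1, 1) = u := by
  have key : ((Pi.evalMonoidHom (fun _ : G × H => FreeGroup (Idx G H)) (1, 1)).comp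
      (psi G H)) = MonoidHom.id _ := by
    refine FreeGroup.ext_hom _ _ fun i => ?_
    simp only [MonoidHom.comp_apply, Pi.evalMonoidHom_apply, psi, FreeGroup.lift_apply_of,
      MonoidHom.id_apply, beta]
    rw [show ((1 : G) * i.1.1, (1 : H)) = (i.1.1, (1 : H)) by rw [one_mul],
      show ((1 : G) * i.1.1, (1 : H) * i.1.2) = (i.1.1, i.1.2) by rw [one_mul, one_mul],
      show ((1 : G), (1 : H) * i.1.2) = ((1 : G), i.1.2) by rw [one_mul]]
    rw [xt_fst_one, xt_snd_one, xt_fst_one, xt_idx]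
    simp
  calc psi G H u (1, 1)
      = ((Pi.evalMonoidHom (fun _ : G × H => FreeGroup (Idx G H)) (1, 1)).comp
          (psi G H)) u := rfl
    _ = u := by rw [key]; rfl

lemma rho_injective : Function.Injective (rho G H) := by
  rw [injective_iff_map_eq_one]
  intro u hu
  have h1 : SemidirectProduct.inl (psi G H u) = (1 : W G H) := by
    have := congrArg (fun f : FreeGroup (Idx G H) →* W G H => f u) inl_comp_psi
    simpa [hu] using this
  have h2 : psi G H u = 1 := SemidirectProduct.inl_injective (by simpa using h1)
  have h3 := psi_eval (G := G) (H := H) u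
  rw [h2] at h3
  simpa using h3.symm

variable (G H) in
/-- The subgroup generated by the commutators. -/
noncomputable def S : Subgroup (Coprod G H) := Subgroup.closure (Set.range (a (G := G) (H := H)))

lemma cc_mem (g : G) (h : H) : cc g h ∈ S G H := by
  by_cases hg : g = 1
  · have : cc g h = 1 := by subst hg; simp [cc, map_inv]
    rw [this]; exact one_mem _
  by_cases hh : h = 1
  · have : cc g h = 1 := by subst hh; simp [cc, map_inv]
    rw [this]; exact one_mem _
  exact Subgroup.subset_closure ⟨⟨(g, h), hg, hh⟩, rfl⟩

lemma inl_conj_cc (g' g : G) (h : H) :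
    Coprod.inl g' * cc g h * (Coprod.inl g')⁻¹ = cc (g' * g) h * (cc g' h)⁻¹ := by
  simp only [cc, map_mul, map_inv]
  group

lemma inr_conj_cc (h' : H) (g : G) (h : H) :
    Coprod.inr h' * cc g h * (Coprod.inr h')⁻¹ = (cc g h')⁻¹ * cc g (h' * h) := by
  simp only [cc, map_mul, map_inv]
  group

lemma conj_mem (w : Coprod G H) : ∀ s ∈ S G H, w * s * w⁻¹ ∈ S G H := by
  induction w using Coprod.induction_on with
  | inl g' =>
    intro s hs
    induction hs using Subgroup.closure_induction with
    | mem x hx =>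
      obtain ⟨i, rfl⟩ := hx
      rw [show a i = cc i.1.1 i.1.2 from rfl, inl_conj_cc]
      exact mul_mem (cc_mem _ _) (inv_mem (cc_mem _ _))
    | one => simpa using one_mem (S G H)
    | mul x y _ _ hx hy =>
      have hr : Coprod.inl g' * (x * y) * (Coprod.inl g')⁻¹ =
          (Coprod.inl g' * x * (Coprod.inl g')⁻¹) * (Coprod.inl g' * y * (Coprod.inl g')⁻¹) := by
        group
      rw [hr]; exact mul_mem hx hy
    | inv x _ hx =>
      have hr : Coprod.inl g' * x⁻¹ * (Coprod.inl g')⁻¹ =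
          (Coprod.inl g' * x * (Coprod.inl g')⁻¹)⁻¹ := by group
      rw [hr]; exact inv_mem hx
  | inr h' =>
    intro s hs
    induction hs using Subgroup.closure_induction with
    | mem x hx =>
      obtain ⟨i, rfl⟩ := hx
      rw [show a i = cc i.1.1 i.1.2 from rfl, inr_conj_cc]
      exact mul_mem (inv_mem (cc_mem _ _)) (cc_mem _ _)
    | one => simpa using one_mem (S G H)
    | mul x y _ _ hx hy =>
      have hr : Coprod.inr h' * (x * y) * (Coprod.inr h')⁻¹ =
          (Coprod.inr h' * x * (Coprod.inr h')⁻¹) * (Coprod.inr h' * y * (Coprod.inr h')⁻¹) := by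
        group
      rw [hr]; exact mul_mem hx hy
    | inv x _ hx =>
      have hr : Coprod.inr h' * x⁻¹ * (Coprod.inr h')⁻¹ =
          (Coprod.inr h' * x * (Coprod.inr h')⁻¹)⁻¹ := by group
      rw [hr]; exact inv_mem hx
  | mul x y hx hy =>
    intro s hs
    have hr : x * y * s * (x * y)⁻¹ = x * (y * s * y⁻¹) * x⁻¹ := by group
    rw [hr]
    exact hx _ (hy _ hs)

lemma defect_mem (w : Coprod G H) :
    w * (Coprod.inr (Coprod.snd w))⁻¹ * (Coprod.inl (Coprod.fst w))⁻¹ ∈ S G H := by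
  induction w using Coprod.induction_on with
  | inl g =>
    have : Coprod.inl g * (Coprod.inr (Coprod.snd (Coprod.inl (N := H) g)))⁻¹ *
        (Coprod.inl (Coprod.fst (Coprod.inl (N := H) g)))⁻¹ = 1 := by
      simp
    rw [this]; exact one_mem _
  | inr h =>
    have : Coprod.inr h * (Coprod.inr (Coprod.snd (Coprod.inr (M := G) h)))⁻¹ *
        (Coprod.inl (Coprod.fst (Coprod.inr (M := G) h)))⁻¹ = 1 := by
      simp
    rw [this]; exact one_mem _
  | mul x y hx hy =>
    set l₁ := Coprod.inl (N := H) (Coprod.fst x) with hl₁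
    set r₁ := Coprod.inr (M := G) (Coprod.snd x) with hr₁
    set l₂ := Coprod.inl (N := H) (Coprod.fst y) with hl₂
    set r₂ := Coprod.inr (M := G) (Coprod.snd y) with hr₂
    have key : x * y * (Coprod.inr (Coprod.snd (x * y)))⁻¹ *
        (Coprod.inl (Coprod.fst (x * y)))⁻¹ =
        (x * r₁⁻¹ * l₁⁻¹) * ((l₁ * r₁) * (y * r₂⁻¹ * l₂⁻¹) * (l₁ * r₁)⁻¹) *
          (l₁ * (l₂ * r₁ * l₂⁻¹ * r₁⁻¹)⁻¹ * l₁⁻¹) := by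
      rw [map_mul, map_mul, map_mul, map_mul, ← hl₁, ← hl₂, ← hr₁, ← hr₂]
      group
    rw [key]
    refine mul_mem (mul_mem hx (conj_mem _ _ hy)) ?_
    have hcc : l₂ * r₁ * l₂⁻¹ * r₁⁻¹ = cc (Coprod.fst y) (Coprod.snd x) := rfl
    rw [hcc]
    exact conj_mem (Coprod.inl (Coprod.fst x)) _ (inv_mem (cc_mem _ _))

lemma range_rho :
    (rho G H).range = MonoidHom.ker (Coprod.lift (MonoidHom.inl G H) (MonoidHom.inr G H)) := by
  have hπ : Coprod.lift (MonoidHom.inl G H) (MonoidHom.inr G H) = Coprod.toProd := rfl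
  rw [rho, FreeGroup.range_lift_eq_closure]
  apply le_antisymm
  · rw [Subgroup.closure_le]
    rintro x ⟨i, rfl⟩
    simp only [SetLike.mem_coe, MonoidHom.mem_ker, hπ]
    show Coprod.toProd (cc i.1.1 i.1.2) = 1
    simp [cc, map_inv, Prod.ext_iff]
  · intro w hw
    rw [MonoidHom.mem_ker, hπ] at hw
    have h1 : Coprod.fst w = 1 := by
      rw [← Coprod.fst_toProd, hw]; rfl
    have h2 : Coprod.snd w = 1 := by
      rw [← Coprod.snd_toProd, hw]; rfl
    have h3 := defect_mem w
    rw [h1, h2] at h3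
    simpa [S] using h3

end KerCoprodToProdAux

/-- The kernel of the canonical map from the free product G * H onto the direct product
G × H is a free group. -/
theorem ker_coprod_to_prod_isFreeGroup (G H : Type*) [Group G] [Group H] :
    IsFreeGroup
      ↥(MonoidHom.ker (Monoid.Coprod.lift (MonoidHom.inl G H) (MonoidHom.inr G H))) := by
  letI e1 := MonoidHom.ofInjective (KerCoprodToProdAux.rho_injective (G := G) (H := H))
  letI e2 := MulEquiv.subgroupCongr (KerCoprodToProdAux.range_rho (G := G) (H := H))
  exact IsFreeGroup.ofMulEquiv (e1.trans e2)
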